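/- Let d ≥ 1, let w ∈ ℚ^d and t ∈ ℚ define a linear classifier L(x) = 1 iff w·x ≥ t on {0,1}^d, let x ∈ {0,1}^d, and define the score of feature i as s_i = w_i·(2x_i − 1)·(2L(x) − 1). Let y be a partial instance with y ⊆ x (i.e., y agrees with x on its defined coordinates), let i be a coordinate undefined in y with s_i ≥ 0, and let y ⊕ i be y with coordinate i set to x_i. Then, under the uniform distribution over completions, Pr_{z ∈ comp(y ⊕ i)}[L(z) = L(x)] ≥ Pr_{z ∈ comp(y)}[L(z) = L(x)]. -/

import Mathlib

/-- Output of the linear classifier with weights `w` and threshold `t` on `z ∈ {0,1}^d`. -/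
def linOut {d : ℕ} (w : Fin d → ℚ) (t : ℚ) (z : Fin d → Bool) : Bool :=
  decide (t ≤ ∑ i, w i * (if z i then 1 else 0))

/-- Completions of a partial instance `y ∈ {0,1,⊥}^d`. -/
def completions {d : ℕ} (y : Fin d → Option Bool) : Finset (Fin d → Bool) :=
  Finset.univ.filter (fun z => ∀ i, ∀ b, y i = some b → z i = b)

/-- `Pr_{z ~ U(y)}[L(z) = L(x)]`, uniform over the completions of `y`. -/
def prSame {d : ℕ} (w : Fin d → ℚ) (t : ℚ) (x : Fin d → Bool)
    (y : Fin d → Option Bool) : ℚ :=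
  (((completions y).filter (fun z => linOut w t z = linOut w t x)).card : ℚ)
    / ((completions y).card : ℚ)

/-- Score of feature `i`: `w_i (2x_i - 1)(2L(x) - 1)`. -/
def score {d : ℕ} (w : Fin d → ℚ) (t : ℚ) (x : Fin d → Bool) (i : Fin d) : ℚ :=
  w i * (2 * (if x i then 1 else 0) - 1) * (2 * (if linOut w t x then 1 else 0) - 1)

/-- `y ⊆ x`: the partial instance `y` agrees with `x` on its defined coordinates. -/
def subsetOf {d : ℕ} (y : Fin d → Option Bool) (x : Fin d → Bool) : Prop :=
  ∀ i, ∀ b, y i = some b → x i = b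

lemma mem_completions {d : ℕ} {y : Fin d → Option Bool} {z : Fin d → Bool} :
    z ∈ completions y ↔ ∀ j b, y j = some b → z j = b := by
  simp [completions]

lemma sum_update {d : ℕ} (w : Fin d → ℚ) (z : Fin d → Bool) (i : Fin d) (b : Bool) :
    ∑ j, w j * (if (Function.update z i b) j then 1 else 0)
      = (∑ j, w j * (if z j then 1 else 0))
        + w i * ((if b then 1 else 0) - (if z i then 1 else 0)) := by
  rw [Fintype.sum_eq_add_sum_compl i, Fintype.sum_eq_add_sum_compl i
      (fun j => w j * (if z j then 1 else 0))]
  have h : ∑ j ∈ ({i} : Finset (Fin d))ᶜ, w j * (if (Function.update z i b) j then 1 else 0)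
      = ∑ j ∈ ({i} : Finset (Fin d))ᶜ, w j * (if z j then 1 else 0) := by
    apply Finset.sum_congr rfl
    intro j hj
    rw [Function.update_of_ne (by simpa using hj)]
  rw [h, Function.update_self]
  ring

lemma mem_completions_update {d : ℕ} {y : Fin d → Option Bool} {i : Fin d}
    (hi : y i = none) (c : Bool) {z : Fin d → Bool} :
    z ∈ completions (Function.update y i (some c)) ↔ z ∈ completions y ∧ z i = c := by
  simp only [mem_completions]
  constructor
  · intro h
    refine ⟨fun j b hjb => ?_, h i c (by simp)⟩
    rcases eq_or_ne j i with rfl | hne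
    · rw [hi] at hjb; exact absurd hjb (by simp)
    · exact h j b (by rwa [Function.update_of_ne hne])
  · rintro ⟨h, hzi⟩ j b hjb
    rcases eq_or_ne j i with rfl | hne
    · rw [Function.update_self] at hjb
      injection hjb with hb
      rw [hzi, hb]
    · rw [Function.update_of_ne hne] at hjb
      exact h j b hjb

theorem add_nonneg_score_feature (d : ℕ) (hd : 1 ≤ d) (w : Fin d → ℚ) (t : ℚ)
    (x : Fin d → Bool) (y : Fin d → Option Bool) (hy : subsetOf y x)
    (i : Fin d) (hi : y i = none) (hs : 0 ≤ score w t x i) :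
    prSame w t x y ≤ prSame w t x (Function.update y i (some (x i))) := by
  classical
  set y1 := Function.update y i (some (x i)) with hy1
  set y2 := Function.update y i (some (!x i)) with hy2
  set P : (Fin d → Bool) → Prop := fun z => linOut w t z = linOut w t x with hP
  -- flip map
  set f : (Fin d → Bool) → (Fin d → Bool) := fun z => Function.update z i (x i) with hf
  -- key invariance
  have hflip : ∀ z : Fin d → Bool, z i = !x i → linOut w t z = linOut w t x →
      linOut w t (f z) = linOut w t x := by
    intro z hzi hz
    have hsum := sum_update w z i (x i)
    rw [hzi] at hsum
    have hdelta : (if x i then (1:ℚ) else 0) - (if !x i then 1 else 0)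
        = 2 * (if x i then 1 else 0) - 1 := by cases x i <;> norm_num
    rw [hdelta] at hsum
    set S := ∑ j, w j * (if z j then (1:ℚ) else 0) with hS
    cases hLx : linOut w t x with
    | true =>
      rw [hLx] at hz
      have hzS : t ≤ S := by simpa [linOut, hS] using hz
      have hdel : 0 ≤ w i * (2 * (if x i then (1:ℚ) else 0) - 1) := by
        have := hs
        rw [score, hLx] at this
        simpa using this
      show linOut w t (f z) = true
      simp only [linOut, hf, hsum, decide_eq_true_iff]
      linarith
    | false =>
      rw [hLx] at hz
      have hzS : ¬ t ≤ S := by simpa [linOut, hS] using hz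
      have hdel : w i * (2 * (if x i then (1:ℚ) else 0) - 1) ≤ 0 := by
        have := hs
        rw [score, hLx] at this
        cases hxi : x i <;> rw [hxi] at this <;> norm_num at this ⊢ <;> linarith
      show linOut w t (f z) = false
      simp only [linOut, hf, hsum]
      simp only [decide_eq_false_iff_not]
      intro hcon
      apply hzS
      linarith
  -- partition of completions y
  have hmem1 : ∀ z : Fin d → Bool,
      z ∈ completions y1 ↔ z ∈ completions y ∧ z i = x i :=
    fun z => mem_completions_update hi (x i)
  have hmem2 : ∀ z : Fin d → Bool,
      z ∈ completions y2 ↔ z ∈ completions y ∧ z i = !x i :=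
    fun z => mem_completions_update hi (!x i)
  have hunion : completions y = completions y1 ∪ completions y2 := by
    ext z
    rw [Finset.mem_union, hmem1, hmem2]
    constructor
    · intro hz
      cases hzx : z i <;> cases hx : x i <;> simp_all
    · rintro (⟨h, _⟩ | ⟨h, _⟩) <;> exact h
  have hdisj : Disjoint (completions y1) (completions y2) := by
    rw [Finset.disjoint_left]
    intro z h1 h2
    rw [hmem1] at h1; rw [hmem2] at h2
    have := h1.2.symm.trans h2.2
    exact absurd this (by cases x i <;> simp)
  -- f maps completions y2 into completions y1, injectively, surjectively
  have hfmem : ∀ z ∈ completions y2, f z ∈ completions y1 := by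
    intro z hz
    rw [hmem2] at hz
    rw [hmem1]
    refine ⟨?_, by simp [hf]⟩
    rw [mem_completions] at hz ⊢
    intro j b hjb
    rcases eq_or_ne j i with rfl | hne
    · rw [hi] at hjb; exact absurd hjb (by simp)
    · show Function.update z i (x i) j = b
      rw [Function.update_of_ne hne]; exact hz.1 j b hjb
  have hfinj : Set.InjOn f (completions y2) := by
    intro z1 h1 z2 h2 heq
    rw [Finset.mem_coe, hmem2] at h1 h2
    funext j
    rcases eq_or_ne j i with rfl | hne
    · rw [h1.2, h2.2]
    · have := congrFun heq j
      simpa only [hf, Function.update_of_ne hne] using this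
  have hfsurj : ∀ z ∈ completions y1, ∃ z' ∈ completions y2, f z' = z := by
    intro z hz
    rw [hmem1] at hz
    refine ⟨Function.update z i (!x i), ?_, ?_⟩
    · rw [hmem2]
      refine ⟨?_, by simp⟩
      rw [mem_completions] at hz ⊢
      intro j b hjb
      rcases eq_or_ne j i with rfl | hne
      · rw [hi] at hjb; exact absurd hjb (by simp)
      · rw [Function.update_of_ne hne]; exact hz.1 j b hjb
    · funext j
      rcases eq_or_ne j i with rfl | hne
      · simp [hf, hz.2]
      · simp [hf, Function.update_of_ne hne]
  -- cardinalities
  have hcard12 : (completions y2).card = (completions y1).card := by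
    apply Finset.card_bij (fun z _ => f z) hfmem
    · intro z1 h1 z2 h2 heq; exact hfinj h1 h2 heq
    · intro z hz
      obtain ⟨z', hz', hfz⟩ := hfsurj z hz
      exact ⟨z', hz', hfz⟩
  -- filtered inequality
  have hfilter_le : ((completions y2).filter (fun z => linOut w t z = linOut w t x)).card
      ≤ ((completions y1).filter (fun z => linOut w t z = linOut w t x)).card := by
    apply Finset.card_le_card_of_injOn f
    · intro z hz
      rw [Finset.mem_coe, Finset.mem_filter] at hz ⊢
      have hzmem := hz.1
      refine ⟨hfmem z hzmem, ?_⟩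
      rw [hmem2] at hzmem
      exact hflip z hzmem.2 hz.2
    · intro z1 h1 z2 h2 heq
      rw [Finset.mem_coe, Finset.mem_filter] at h1 h2
      exact hfinj h1.1 h2.1 heq
  -- nonemptiness of completions y1
  have hne : (completions y1).Nonempty := by
    refine ⟨fun j => (y1 j).getD false, ?_⟩
    rw [mem_completions]
    intro j b hjb
    rw [hjb]; rfl
  have hn : 0 < (completions y1).card := Finset.card_pos.mpr hne
  -- unfold everything and compute
  rw [prSame, prSame, hunion]
  rw [Finset.filter_union, Finset.card_union_of_disjoint (Finset.disjoint_filter_filter hdisj),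
      Finset.card_union_of_disjoint hdisj, hcard12]
  set a1 := ((completions y1).filter (fun z => linOut w t z = linOut w t x)).card
  set a2 := ((completions y2).filter (fun z => linOut w t z = linOut w t x)).card
  set n := (completions y1).card
  have hnQ : (0:ℚ) < n := by exact_mod_cast hn
  rw [div_le_div_iff₀ (by positivity) hnQ]
  have ha : (a2:ℚ) ≤ a1 := by exact_mod_cast hfilter_le
  push_cast
  nlinarith
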